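/- arXiv:2601.19175 — 2 statements merged into one kernel-verified Lean document; each statement's English description precedes it below -/
import Mathlib

section
/- With R₀₀ = K₀ + P₀P₀ᵀ, R₁₁ = K₁ + P₁P₁ᵀ, R₁₀ = P₁P₀ᵀ, R₀₁ = P₀P₁ᵀ (K₀, K₁ diagonal positive definite, P₀ ∈ ℝ^{m×d}, P₁ ∈ ℝ^{(n−m)×d}), and S₀ = I_d + P₀ᵀK₀⁻¹P₀, the Schur complement satisfies R₁₁ − R₁₀ R₀₀⁻¹ R₀₁ = P₁ S₀⁻¹ P₁ᵀ + K₁. -/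
open Matrix

theorem woodbury_conditional_covariance {m d p : ℕ}
    (k0 : Fin m → ℝ) (hk0 : ∀ i, 0 < k0 i)
    (k1 : Fin p → ℝ) (hk1 : ∀ i, 0 < k1 i)
    (K0 : Matrix (Fin m) (Fin m) ℝ) (hK0 : K0 = Matrix.diagonal k0)
    (K1 : Matrix (Fin p) (Fin p) ℝ) (hK1 : K1 = Matrix.diagonal k1)
    (P0 : Matrix (Fin m) (Fin d) ℝ) (P1 : Matrix (Fin p) (Fin d) ℝ)
    (S0 : Matrix (Fin d) (Fin d) ℝ) (hS0 : S0 = 1 + P0ᵀ * K0⁻¹ * P0) :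
    (K1 + P1 * P1ᵀ) - (P1 * P0ᵀ) * (K0 + P0 * P0ᵀ)⁻¹ * (P0 * P1ᵀ)
      = P1 * S0⁻¹ * P1ᵀ + K1 := by
  have hK0pd : K0.PosDef := hK0 ▸ Matrix.PosDef.diagonal hk0
  have hK0u : IsUnit K0 := hK0pd.isUnit
  have hK0inv : K0 * K0⁻¹ = 1 := Matrix.mul_nonsing_inv _ (isUnit_iff_isUnit_det _ |>.1 hK0u)
  have hK0inv' : K0⁻¹ * K0 = 1 := Matrix.nonsing_inv_mul _ (isUnit_iff_isUnit_det _ |>.1 hK0u)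
  -- S0 is positive definite, hence invertible
  have hS0pd : S0.PosDef := by
    rw [hS0, add_comm]
    have h2 : (P0ᴴ * K0⁻¹ * P0 : Matrix (Fin d) (Fin d) ℝ).PosSemidef :=
      hK0pd.inv.posSemidef.conjTranspose_mul_mul_same P0
    rw [Matrix.conjTranspose_eq_transpose_of_trivial] at h2
    exact Matrix.PosDef.posSemidef_add h2 Matrix.PosDef.one
  have hS0u : IsUnit S0.det := isUnit_iff_isUnit_det _ |>.1 hS0pd.isUnit
  have hS0inv : S0 * S0⁻¹ = 1 := Matrix.mul_nonsing_inv _ hS0u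
  have hS0inv' : S0⁻¹ * S0 = 1 := Matrix.nonsing_inv_mul _ hS0u
  have hA : P0ᵀ * K0⁻¹ * P0 = S0 - 1 := by rw [hS0]; abel
  -- Woodbury: inverse of K0 + P0 P0ᵀ
  set B := K0⁻¹ - K0⁻¹ * P0 * S0⁻¹ * P0ᵀ * K0⁻¹ with hB
  have hW : (K0 + P0 * P0ᵀ) * B = 1 := by
    have expand : (K0 + P0 * P0ᵀ) * B
        = (K0 * K0⁻¹) + P0 * P0ᵀ * K0⁻¹ - (K0 * K0⁻¹) * (P0 * S0⁻¹ * (P0ᵀ * K0⁻¹))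
          - P0 * ((P0ᵀ * K0⁻¹ * P0) * S0⁻¹) * (P0ᵀ * K0⁻¹) := by
      rw [hB]
      simp only [Matrix.mul_sub, Matrix.sub_mul, Matrix.mul_add, Matrix.add_mul,
        Matrix.mul_assoc, Matrix.mul_one, Matrix.one_mul]
      abel
    rw [expand, hK0inv, hA, Matrix.sub_mul, Matrix.one_mul, hS0inv]
    have : P0 * (1 - S0⁻¹) * (P0ᵀ * K0⁻¹)
        = P0 * P0ᵀ * K0⁻¹ - P0 * S0⁻¹ * (P0ᵀ * K0⁻¹) := by
      simp only [Matrix.mul_sub, Matrix.sub_mul, Matrix.mul_one, Matrix.one_mul,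
        Matrix.mul_assoc]
    rw [one_mul S0⁻¹, this]
    abel
  have hRinv : (K0 + P0 * P0ᵀ)⁻¹ = B := Matrix.inv_eq_right_inv hW
  rw [hRinv, hB]
  -- compute P0ᵀ * B * P0 = 1 - S0⁻¹
  have key : P0ᵀ * (K0⁻¹ - K0⁻¹ * P0 * S0⁻¹ * P0ᵀ * K0⁻¹) * P0 = 1 - S0⁻¹ := by
    have step : P0ᵀ * (K0⁻¹ - K0⁻¹ * P0 * S0⁻¹ * P0ᵀ * K0⁻¹) * P0
        = (P0ᵀ * K0⁻¹ * P0) - (P0ᵀ * K0⁻¹ * P0) * S0⁻¹ * (P0ᵀ * K0⁻¹ * P0) := by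
      simp only [Matrix.mul_sub, Matrix.sub_mul, Matrix.mul_assoc]
    rw [step, hA]
    simp only [Matrix.sub_mul, Matrix.mul_sub, Matrix.one_mul, Matrix.mul_one, hS0inv, hS0inv']
    abel
  have final : P1 * P0ᵀ * (K0⁻¹ - K0⁻¹ * P0 * S0⁻¹ * P0ᵀ * K0⁻¹) * (P0 * P1ᵀ)
      = P1 * (P0ᵀ * (K0⁻¹ - K0⁻¹ * P0 * S0⁻¹ * P0ᵀ * K0⁻¹) * P0) * P1ᵀ := by
    simp only [Matrix.mul_assoc]
  rw [final, key]
  simp only [Matrix.mul_sub, Matrix.sub_mul, Matrix.mul_one, Matrix.one_mul]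
  abel
end

section
/- The gradient ∇_R 𝓛(R) = ½R⁻¹ − ½R⁻¹ z zᵀ R⁻¹ is Lipschitz continuous on any set of symmetric positive definite matrices R with ‖R⁻¹‖₂ ≤ α and fixed z with ‖zzᵀ‖_F ≤ β: for any two such R₁, R₂, ‖∇𝓛(R₁) − ∇𝓛(R₂)‖_F ≤ ½(α² + 2α³β)‖R₁ − R₂‖_F. -/
/-- Frobenius norm of a real matrix. -/
noncomputable def frobNorm {m n : ℕ} (A : Matrix (Fin m) (Fin n) ℝ) : ℝ :=
  Real.sqrt (∑ i, ∑ j, (A i j) ^ 2)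

/-- `A` has spectral (ℓ2 operator) norm at most `α`. -/
def specNormLE {m : ℕ} (A : Matrix (Fin m) (Fin m) ℝ) (α : ℝ) : Prop :=
  ∀ x : Fin m → ℝ,
    Real.sqrt (∑ i, (A.mulVec x i) ^ 2) ≤ α * Real.sqrt (∑ i, (x i) ^ 2)

/-- The gradient of the Gaussian copula negative log-likelihood loss
`𝓛(R) = ½ log det R + ½ zᵀ(R⁻¹ − I)z` with respect to `R`:
`∇_R 𝓛 = ½R⁻¹ − ½R⁻¹ z zᵀ R⁻¹`. -/
noncomputable def gradLoss {m : ℕ} (z : Fin m → ℝ)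
    (R : Matrix (Fin m) (Fin m) ℝ) : Matrix (Fin m) (Fin m) ℝ :=
  (1/2 : ℝ) • R⁻¹ - (1/2 : ℝ) • (R⁻¹ * Matrix.vecMulVec z z * R⁻¹)

section Aux

attribute [local instance] Matrix.frobeniusNormedAddCommGroup Matrix.frobeniusNormedSpace
open Matrix

lemma frobNorm_eq {m n : ℕ} (A : Matrix (Fin m) (Fin n) ℝ) : frobNorm A = ‖A‖ := by
  rw [Matrix.frobenius_norm_def, frobNorm, Real.sqrt_eq_rpow]
  congr 1
  refine Finset.sum_congr rfl fun i _ => Finset.sum_congr rfl fun j _ => ?_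
  rw [Real.norm_eq_abs, Real.rpow_two, sq_abs]

lemma frobNorm_nonneg {m n : ℕ} (A : Matrix (Fin m) (Fin n) ℝ) : 0 ≤ frobNorm A :=
  Real.sqrt_nonneg _

lemma frobNorm_sub_le {m n : ℕ} (A B : Matrix (Fin m) (Fin n) ℝ) :
    frobNorm (A - B) ≤ frobNorm A + frobNorm B := by
  simp only [frobNorm_eq]; exact norm_sub_le A B

lemma frobNorm_add_le {m n : ℕ} (A B : Matrix (Fin m) (Fin n) ℝ) :
    frobNorm (A + B) ≤ frobNorm A + frobNorm B := by
  simp only [frobNorm_eq]; exact norm_add_le A B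

lemma frobNorm_smul {m n : ℕ} (c : ℝ) (A : Matrix (Fin m) (Fin n) ℝ) :
    frobNorm (c • A) = |c| * frobNorm A := by
  simp only [frobNorm_eq]; rw [norm_smul, Real.norm_eq_abs]

lemma frobNorm_neg_sub {m n : ℕ} (A B : Matrix (Fin m) (Fin n) ℝ) :
    frobNorm (A - B) = frobNorm (B - A) := by
  simp only [frobNorm_eq]; exact norm_sub_rev A B

lemma frobNorm_transpose {m n : ℕ} (A : Matrix (Fin m) (Fin n) ℝ) :
    frobNorm Aᵀ = frobNorm A := by
  simp only [frobNorm_eq]; exact Matrix.frobenius_norm_transpose A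

lemma frobNorm_mul_le {l m n : ℕ} (A : Matrix (Fin l) (Fin m) ℝ) (B : Matrix (Fin m) (Fin n) ℝ) :
    frobNorm (A * B) ≤ frobNorm A * frobNorm B := by
  simp only [frobNorm_eq]; exact Matrix.frobenius_norm_mul A B

lemma frob_mul_left {m n : ℕ} {A : Matrix (Fin m) (Fin m) ℝ} {α : ℝ}
    (hα : 0 ≤ α) (hA : specNormLE A α) (B : Matrix (Fin m) (Fin n) ℝ) :
    frobNorm (A * B) ≤ α * frobNorm B := by
  have key : ∀ j : Fin n, ∑ i, ((A * B) i j) ^ 2 ≤ α ^ 2 * ∑ i, (B i j) ^ 2 := by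
    intro j
    have h := hA (fun k => B k j)
    have hcol : ∀ i, (A * B) i j = A.mulVec (fun k => B k j) i := by
      intro i; rw [Matrix.mul_apply, Matrix.mulVec]; rfl
    have hL : 0 ≤ Real.sqrt (∑ i, (A.mulVec (fun k => B k j) i) ^ 2) := Real.sqrt_nonneg _
    have := pow_le_pow_left₀ hL h 2
    rw [Real.sq_sqrt (by positivity), mul_pow, Real.sq_sqrt (by positivity)] at this
    calc ∑ i, ((A * B) i j) ^ 2 = ∑ i, (A.mulVec (fun k => B k j) i) ^ 2 := by
          refine Finset.sum_congr rfl fun i _ => by rw [hcol i]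
      _ ≤ α ^ 2 * ∑ i, (B i j) ^ 2 := this
  have hsum : ∑ i, ∑ j, ((A * B) i j) ^ 2 ≤ α ^ 2 * ∑ i, ∑ j, (B i j) ^ 2 := by
    calc ∑ i, ∑ j, ((A * B) i j) ^ 2 = ∑ j, ∑ i, ((A * B) i j) ^ 2 := by rw [Finset.sum_comm]
      _ ≤ ∑ j : Fin n, α ^ 2 * ∑ i, (B i j) ^ 2 := Finset.sum_le_sum fun j _ => key j
      _ = α ^ 2 * ∑ j, ∑ i, (B i j) ^ 2 := by rw [Finset.mul_sum]
      _ = α ^ 2 * ∑ i, ∑ j, (B i j) ^ 2 := by rw [Finset.sum_comm]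
  calc frobNorm (A * B) ≤ Real.sqrt (α ^ 2 * ∑ i, ∑ j, (B i j) ^ 2) :=
        Real.sqrt_le_sqrt hsum
    _ = α * frobNorm B := by
        rw [Real.sqrt_mul (by positivity), Real.sqrt_sq hα]; rfl

lemma frob_mul_right {m n : ℕ} {A : Matrix (Fin m) (Fin m) ℝ} {α : ℝ}
    (hα : 0 ≤ α) (hA : specNormLE A α) (hsym : Aᵀ = A) (B : Matrix (Fin n) (Fin m) ℝ) :
    frobNorm (B * A) ≤ α * frobNorm B := by
  have h1 : frobNorm (B * A) = frobNorm (A * Bᵀ) := by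
    rw [← frobNorm_transpose (B * A), Matrix.transpose_mul, hsym]
  rw [h1]
  calc frobNorm (A * Bᵀ) ≤ α * frobNorm Bᵀ := frob_mul_left hα hA Bᵀ
    _ = α * frobNorm B := by rw [frobNorm_transpose]

end Aux

open Matrix in
theorem gradLoss_lipschitz {m : ℕ} (z : Fin m → ℝ) (α β : ℝ)
    (hβ : frobNorm (Matrix.vecMulVec z z) ≤ β)
    (R1 R2 : Matrix (Fin m) (Fin m) ℝ)
    (hR1 : R1.PosDef) (hR2 : R2.PosDef)
    (h1 : specNormLE R1⁻¹ α) (h2 : specNormLE R2⁻¹ α) :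
    frobNorm (gradLoss z R1 - gradLoss z R2)
      ≤ (1/2) * (α ^ 2 + 2 * α ^ 3 * β) * frobNorm (R1 - R2) := by
  rcases Nat.eq_zero_or_pos m with hm | hm
  · subst hm
    simp [frobNorm]
  have hα : 0 ≤ α := by
    have h := h1 (fun i => if i = ⟨0, hm⟩ then (1:ℝ) else 0)
    have hx : ∑ i : Fin m, (if i = (⟨0, hm⟩ : Fin m) then (1:ℝ) else 0) ^ 2 = 1 := by
      simp [apply_ite (· ^ 2)]
    rw [hx, Real.sqrt_one, mul_one] at h
    exact le_trans (Real.sqrt_nonneg _) h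
  have hβ0 : 0 ≤ β := le_trans (frobNorm_nonneg _) hβ
  have hs1 : (R1⁻¹)ᵀ = R1⁻¹ := by
    rw [Matrix.transpose_nonsing_inv]
    congr 1
    have := hR1.isHermitian
    rwa [Matrix.IsHermitian, Matrix.conjTranspose_eq_transpose_of_trivial] at this
  have hs2 : (R2⁻¹)ᵀ = R2⁻¹ := by
    rw [Matrix.transpose_nonsing_inv]
    congr 1
    have := hR2.isHermitian
    rwa [Matrix.IsHermitian, Matrix.conjTranspose_eq_transpose_of_trivial] at this
  set Z := Matrix.vecMulVec z z with hZdef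
  set E := R1⁻¹ - R2⁻¹ with hEdef
  have i1 : R1⁻¹ * R1 = 1 := Matrix.nonsing_inv_mul R1 hR1.det_pos.ne'.isUnit
  have i2 : R2 * R2⁻¹ = 1 := Matrix.mul_nonsing_inv R2 hR2.det_pos.ne'.isUnit
  have hE : E = R1⁻¹ * (R2 - R1) * R2⁻¹ := by
    calc E = R1⁻¹ * (R2 * R2⁻¹) - (R1⁻¹ * R1) * R2⁻¹ := by rw [i1, i2, mul_one, one_mul]
      _ = R1⁻¹ * (R2 - R1) * R2⁻¹ := by noncomm_ring
  have key0 : R1⁻¹ * Z * R1⁻¹ - R2⁻¹ * Z * R2⁻¹ = E * Z * R1⁻¹ + R2⁻¹ * Z * E := by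
    rw [hEdef]; noncomm_ring
  have key : gradLoss z R1 - gradLoss z R2
      = (1/2 : ℝ) • E - (1/2 : ℝ) • (E * Z * R1⁻¹ + R2⁻¹ * Z * E) := by
    rw [← key0, hEdef]
    simp only [gradLoss, ← hZdef]
    rw [smul_sub, smul_sub]
    abel
  have hbE : frobNorm E ≤ α * (α * frobNorm (R1 - R2)) := by
    rw [hE]
    calc frobNorm (R1⁻¹ * (R2 - R1) * R2⁻¹)
        = frobNorm (R1⁻¹ * ((R2 - R1) * R2⁻¹)) := by rw [mul_assoc]
      _ ≤ α * frobNorm ((R2 - R1) * R2⁻¹) := frob_mul_left hα h1 _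
      _ ≤ α * (α * frobNorm (R2 - R1)) :=
          mul_le_mul_of_nonneg_left (frob_mul_right hα h2 hs2 (R2 - R1)) hα
      _ = α * (α * frobNorm (R1 - R2)) := by rw [frobNorm_neg_sub R2 R1]
  have hT1 : frobNorm (E * Z * R1⁻¹) ≤ α * (frobNorm E * β) := by
    calc frobNorm (E * Z * R1⁻¹) ≤ α * frobNorm (E * Z) := frob_mul_right hα h1 hs1 _
      _ ≤ α * (frobNorm E * frobNorm Z) :=
          mul_le_mul_of_nonneg_left (frobNorm_mul_le _ _) hα
      _ ≤ α * (frobNorm E * β) :=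
          mul_le_mul_of_nonneg_left
            (mul_le_mul_of_nonneg_left hβ (frobNorm_nonneg E)) hα
  have hT2 : frobNorm (R2⁻¹ * Z * E) ≤ α * (β * frobNorm E) := by
    calc frobNorm (R2⁻¹ * Z * E) = frobNorm (R2⁻¹ * (Z * E)) := by rw [mul_assoc]
      _ ≤ α * frobNorm (Z * E) := frob_mul_left hα h2 _
      _ ≤ α * (frobNorm Z * frobNorm E) :=
          mul_le_mul_of_nonneg_left (frobNorm_mul_le _ _) hα
      _ ≤ α * (β * frobNorm E) :=
          mul_le_mul_of_nonneg_left
            (mul_le_mul_of_nonneg_right hβ (frobNorm_nonneg E)) hα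
  have main : frobNorm (gradLoss z R1 - gradLoss z R2)
      ≤ (1/2) * frobNorm E
        + (1/2) * (frobNorm (E * Z * R1⁻¹) + frobNorm (R2⁻¹ * Z * E)) := by
    calc frobNorm (gradLoss z R1 - gradLoss z R2)
        = frobNorm ((1/2 : ℝ) • E - (1/2 : ℝ) • (E * Z * R1⁻¹ + R2⁻¹ * Z * E)) := by rw [key]
      _ ≤ frobNorm ((1/2 : ℝ) • E) + frobNorm ((1/2 : ℝ) • (E * Z * R1⁻¹ + R2⁻¹ * Z * E)) :=
          frobNorm_sub_le _ _
      _ = (1/2) * frobNorm E + (1/2) * frobNorm (E * Z * R1⁻¹ + R2⁻¹ * Z * E) := by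
          rw [frobNorm_smul, frobNorm_smul]; norm_num [abs_of_nonneg]
      _ ≤ (1/2) * frobNorm E
          + (1/2) * (frobNorm (E * Z * R1⁻¹) + frobNorm (R2⁻¹ * Z * E)) := by
          have := frobNorm_add_le (E * Z * R1⁻¹) (R2⁻¹ * Z * E)
          linarith
  have hE0 : 0 ≤ frobNorm E := frobNorm_nonneg E
  have hd0 : 0 ≤ frobNorm (R1 - R2) := frobNorm_nonneg _
  nlinarith [main, hT1, hT2, hbE, mul_le_mul_of_nonneg_left hbE (mul_nonneg hα hβ0),
    mul_nonneg hα hβ0, mul_nonneg (mul_nonneg hα hα) hd0]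
end
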